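/- Let X and Y be Banach spaces and F : X ⇒ Y have closed convex graph. If ȳ is in the interior of F(X), then F is metrically regular at every point (x̄, ȳ) of its graph: there exist K > 0 and ε > 0 such that d(x, F⁻¹(y)) ≤ K d(y, F(x)) whenever ‖x − x̄‖ < ε and ‖y − ȳ‖ < ε. -/

import Mathlib

open EMetric ENNReal NNReal Set

section RU
variable {X Y : Type*}
  [NormedAddCommGroup X] [NormedSpace ℝ X]
  [NormedAddCommGroup Y] [NormedSpace ℝ Y]

/-- Convex combination inside the graph. -/
lemma ru_comb {F : X → Set Y} (hconv : Convex ℝ {p : X × Y | p.2 ∈ F p.1})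
    {x0 x1 : X} {y0 y1 : Y} (h0 : y0 ∈ F x0) (h1 : y1 ∈ F x1)
    {a b : ℝ} (ha : 0 ≤ a) (hb : 0 ≤ b) (hab : a + b = 1) :
    a • y0 + b • y1 ∈ F (a • x0 + b • x1) :=
  hconv (show ((x0, y0) : X × Y) ∈ _ from h0) (show ((x1, y1) : X × Y) ∈ _ from h1) ha hb hab

/-- Points of the graph can be scaled towards `(xb, yb)`. -/
lemma ru_seg {F : X → Set Y} (hconv : Convex ℝ {p : X × Y | p.2 ∈ F p.1})
    {xb : X} {yb : Y} (hxy : yb ∈ F xb) {x : X} {z : Y} (hz : z ∈ F x)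
    {t : ℝ} (ht0 : 0 ≤ t) (ht1 : t ≤ 1) :
    yb + t • (z - yb) ∈ F (xb + t • (x - xb)) := by
  have h := ru_comb hconv hxy hz (a := 1 - t) (b := t) (by linarith) ht0 (by ring)
  have e1 : (1 - t) • yb + t • z = yb + t • (z - yb) := by module
  have e2 : (1 - t) • xb + t • x = xb + t • (x - xb) := by module
  rwa [e1, e2] at h

variable (F : X → Set Y) (xb : X)

/-- The image of the closed unit ball around `xb`. -/
def ruS : Set Y := {w : Y | ∃ u : X, ‖u - xb‖ ≤ 1 ∧ w ∈ F u}

lemma ruS_convex (hconv : Convex ℝ {p : X × Y | p.2 ∈ F p.1}) :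
    Convex ℝ (ruS F xb) := by
  rintro w1 ⟨u1, hu1, h1⟩ w2 ⟨u2, hu2, h2⟩ a b ha hb hab
  refine ⟨a • u1 + b • u2, ?_, ru_comb hconv h1 h2 ha hb hab⟩
  have : a • u1 + b • u2 - xb = a • (u1 - xb) + b • (u2 - xb) := by
    have : a + b = 1 := hab
    match_scalars <;> linarith
  rw [this]
  calc ‖a • (u1 - xb) + b • (u2 - xb)‖ ≤ a * ‖u1 - xb‖ + b * ‖u2 - xb‖ := by
        refine (norm_add_le _ _).trans ?_
        rw [norm_smul, norm_smul, Real.norm_of_nonneg ha, Real.norm_of_nonneg hb]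
    _ ≤ a * 1 + b * 1 := by gcongr
    _ = 1 := by linarith

end RU

section RU2
variable {X Y : Type*}
  [NormedAddCommGroup X] [NormedSpace ℝ X]
  [NormedAddCommGroup Y] [NormedSpace ℝ Y] [CompleteSpace Y]
  {F : X → Set Y} {xb : X} {yb : Y}

/-- Scaling a point of the range towards `yb` lands in `ruS`. -/
lemma ru_scale (hconv : Convex ℝ {p : X × Y | p.2 ∈ F p.1}) (hxy : yb ∈ F xb)
    {z : Y} (hz : ∃ x : X, z ∈ F x) :
    ∃ t : ℝ, 0 < t ∧ t ≤ 1 ∧ yb + t • (z - yb) ∈ ruS F xb := by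
  obtain ⟨x, hx⟩ := hz
  set m : ℝ := max 1 ‖x - xb‖ with hm
  have hm1 : 1 ≤ m := le_max_left _ _
  have hm0 : 0 < m := lt_of_lt_of_le one_pos hm1
  refine ⟨m⁻¹, inv_pos.2 hm0, inv_le_one_of_one_le₀ hm1, xb + m⁻¹ • (x - xb), ?_,
    ru_seg hconv hxy hx (inv_pos.2 hm0).le (inv_le_one_of_one_le₀ hm1)⟩
  have : xb + m⁻¹ • (x - xb) - xb = m⁻¹ • (x - xb) := by abel
  rw [this, norm_smul, Real.norm_of_nonneg (inv_pos.2 hm0).le]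
  calc m⁻¹ * ‖x - xb‖ ≤ m⁻¹ * m := by
        gcongr; exact le_max_right _ _
    _ = 1 := inv_mul_cancel₀ hm0.ne'

/-- Sliding down a segment from `yb` stays in `ruS`. -/
lemma ru_down (hconv : Convex ℝ {p : X × Y | p.2 ∈ F p.1}) (hxy : yb ∈ F xb)
    {v : Y} {a b : ℝ} (hs : yb + a • v ∈ ruS F xb) (hb : 0 ≤ b) (hba : b ≤ a) :
    yb + b • v ∈ ruS F xb := by
  have ha : 0 < a ∨ b = 0 := by
    rcases eq_or_lt_of_le (hb.trans hba) with h | h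
    · exact Or.inr (le_antisymm (h ▸ hba) hb)
    · exact Or.inl h
  rcases ha with ha | rfl
  · have hyb : yb ∈ ruS F xb := ⟨xb, by simp, hxy⟩
    have h := ruS_convex F xb hconv hyb hs (a := 1 - b / a) (b := b / a)
      (by have := div_le_one_of_le₀ hba ha.le; linarith)
      (div_nonneg hb ha.le) (by ring)
    have : (1 - b / a) • yb + (b / a) • (yb + a • v) = yb + b • v := by
      match_scalars <;> field_simp <;> ring
    rwa [this] at h
  · simpa using ⟨xb, by simp, hxy⟩

/-- Baire category: `yb` is in the interior of the closure of `ruS`. -/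
lemma ru_dense (hconv : Convex ℝ {p : X × Y | p.2 ∈ F p.1})
    (hint : yb ∈ interior {y : Y | ∃ x : X, y ∈ F x}) (hxy : yb ∈ F xb) :
    ∃ r : ℝ, 0 < r ∧ Metric.ball yb r ⊆ closure (ruS F xb) := by
  obtain ⟨ρ, hρ, hball⟩ := Metric.mem_nhds_iff.1 (mem_interior_iff_mem_nhds.1 hint)
  -- the whole space is covered by scaled copies of `closure (ruS F xb)`
  set C : ℕ → Set Y := fun n => (fun w => yb + ((n : ℝ) + 1)⁻¹ • (w - yb)) ⁻¹' closure (ruS F xb)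
    with hC
  have hCclosed : ∀ n, IsClosed (C n) :=
    fun n => isClosed_closure.preimage (by fun_prop)
  have hsmall : ∀ w : Y, ∃ s : ℝ, 0 < s ∧ s ≤ 1 ∧ yb + s • (w - yb) ∈ Metric.ball yb ρ := by
    intro w
    refine ⟨min 1 (ρ / (2 * (‖w - yb‖ + 1))), ?_, min_le_left _ _, ?_⟩
    · exact lt_min one_pos (div_pos hρ (by positivity))
    · have h1 : yb + min 1 (ρ / (2 * (‖w - yb‖ + 1))) • (w - yb) - yb
          = min 1 (ρ / (2 * (‖w - yb‖ + 1))) • (w - yb) := by abel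
      rw [Metric.mem_ball, dist_eq_norm, h1, norm_smul, Real.norm_of_nonneg
        (le_of_lt (lt_min one_pos (div_pos hρ (by positivity))))]
      calc min 1 (ρ / (2 * (‖w - yb‖ + 1))) * ‖w - yb‖
          ≤ (ρ / (2 * (‖w - yb‖ + 1))) * (‖w - yb‖ + 1) :=
            mul_le_mul (min_le_right _ _) (by linarith) (norm_nonneg _) (by positivity)
        _ = ρ / 2 := by field_simp
        _ < ρ := by linarith
  have hcover : (⋃ n : ℕ, C n) = univ := by
    refine eq_univ_of_forall fun w => ?_
    obtain ⟨s, hs0, hs1, hsball⟩ := hsmall w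
    obtain ⟨t, ht0, ht1, htS⟩ := ru_scale hconv hxy (hball hsball)
    have hts : yb + (t * s) • (w - yb) ∈ ruS F xb := by
      have : yb + s • (w - yb) - yb = s • (w - yb) := by abel
      rw [this, smul_smul] at htS
      exact htS
    obtain ⟨n, hn⟩ := exists_nat_one_div_lt (show (0:ℝ) < t * s from mul_pos ht0 hs0)
    refine mem_iUnion.2 ⟨n, ?_⟩
    show yb + ((n : ℝ) + 1)⁻¹ • (w - yb) ∈ closure (ruS F xb)
    refine subset_closure (ru_down hconv hxy hts ?_ ?_)
    · positivity
    · rw [one_div] at hn; exact hn.le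
  obtain ⟨n, z0, hz0⟩ := nonempty_interior_of_iUnion_of_closed hCclosed hcover
  obtain ⟨σ, hσ, hσball⟩ := Metric.mem_nhds_iff.1 (mem_interior_iff_mem_nhds.1 hz0)
  set c : ℝ := ((n : ℝ) + 1)⁻¹ with hc
  have hc0 : 0 < c := by positivity
  set p : Y := yb + c • (z0 - yb) with hp
  -- `p` is in the interior of the closure
  have hpint : p ∈ interior (closure (ruS F xb)) := by
    rw [mem_interior_iff_mem_nhds, Metric.mem_nhds_iff]
    refine ⟨σ * c, by positivity, fun v hv => ?_⟩
    have hw : yb + c⁻¹ • (v - yb) ∈ Metric.ball z0 σ := by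
      rw [Metric.mem_ball, dist_eq_norm]
      have e : yb + c⁻¹ • (v - yb) - z0 = c⁻¹ • (v - p) := by
        rw [hp]; match_scalars <;> field_simp <;> ring
      rw [e, norm_smul, Real.norm_of_nonneg (inv_pos.2 hc0).le]
      rw [Metric.mem_ball, dist_eq_norm] at hv
      calc c⁻¹ * ‖v - p‖ < c⁻¹ * (σ * c) := by gcongr
        _ = σ := by field_simp
    have := hσball hw
    rw [hC, mem_preimage] at this
    have e2 : yb + c • (yb + c⁻¹ • (v - yb) - yb) = v := by
      match_scalars <;> field_simp <;> ring
    rwa [e2] at this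
  -- now move `yb` into the interior by the standard convexity trick
  obtain ⟨s, hs0, hs1, hsball⟩ := hsmall (yb + (yb - p))
  have hz : yb + s • (yb - p) ∈ Metric.ball yb ρ := by
    have : yb + (yb - p) - yb = yb - p := by abel
    rwa [this] at hsball
  obtain ⟨t, ht0, ht1, htS⟩ := ru_scale hconv hxy (hball hz)
  have hu : yb + (t * s) • (yb - p) ∈ ruS F xb := by
    have e : yb + s • (yb - p) - yb = s • (yb - p) := by abel
    rw [e, smul_smul] at htS
    exact htS
  set u : ℝ := t * s with hudef
  have hu0 : 0 < u := mul_pos ht0 hs0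
  have hybint : yb ∈ interior (closure (ruS F xb)) := by
    have hcomb := (Convex.closure (ruS_convex F xb hconv)).combo_interior_closure_mem_interior
      hpint (subset_closure (subset_closure hu)) (a := u / (1 + u)) (b := 1 / (1 + u))
      (by positivity) (by positivity) (by field_simp; ring)
    have e : (u / (1 + u)) • p + (1 / (1 + u)) • (yb + u • (yb - p)) = yb := by
      match_scalars <;> field_simp <;> ring
    rwa [e] at hcomb
  obtain ⟨r, hr, hrball⟩ := Metric.mem_nhds_iff.1 (mem_interior_iff_mem_nhds.1 hybint)
  exact ⟨r, hr, hrball⟩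

end RU2

section RU3
variable {X Y : Type*}
  [NormedAddCommGroup X] [NormedSpace ℝ X] [CompleteSpace X]
  [NormedAddCommGroup Y] [NormedSpace ℝ Y]
  {F : X → Set Y} {xb : X} {yb : Y}

lemma ru_step (hconv : Convex ℝ {p : X × Y | p.2 ∈ F p.1}) {r ε : ℝ} (hr : 0 < r)
    (hS : Metric.ball yb r ⊆ closure (ruS F xb))
    (hε : 0 < ε) (hε2 : ε ≤ r / 2) {y : Y} (hyb : ‖y - yb‖ < r / 2)
    {x0 : X} {y0 : Y} (h0 : y0 ∈ F x0) (hy0 : ‖y0 - y‖ < ε) (hx0 : ‖x0 - xb‖ ≤ 2) :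
    ∃ x1 y1, y1 ∈ F x1 ∧ ‖y1 - y‖ < ε / 2 ∧ ‖x1 - x0‖ ≤ 6 * ε / r ∧
      ‖x1 - xb‖ ≤ ‖x0 - xb‖ + 2 * ε / r := by
  set l : ℝ := 2 * ε / r with hl
  have hl0 : 0 < l := by positivity
  have hl1 : l ≤ 1 := by rw [hl]; rw [div_le_one hr]; linarith
  set z : Y := l⁻¹ • (y - (1 - l) • y0) with hz
  have hzb : ‖z - yb‖ < r := by
    have e : z - yb = l⁻¹ • (l • (y - yb) + (1 - l) • (y - y0)) := by
      rw [hz]; match_scalars <;> field_simp <;> ring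
    rw [e, norm_smul, Real.norm_of_nonneg (inv_pos.2 hl0).le]
    have h1 : ‖l • (y - yb) + (1 - l) • (y - y0)‖ < l * r := by
      calc ‖l • (y - yb) + (1 - l) • (y - y0)‖ ≤ l * ‖y - yb‖ + (1 - l) * ‖y - y0‖ := by
            refine (norm_add_le _ _).trans ?_
            rw [norm_smul, norm_smul, Real.norm_of_nonneg hl0.le,
              Real.norm_of_nonneg (by linarith : (0:ℝ) ≤ 1 - l)]
        _ < l * (r / 2) + ε := by
            rw [norm_sub_rev y y0]
            have h2 : (1 - l) * ‖y0 - y‖ ≤ 1 * ε :=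
              mul_le_mul (by linarith) hy0.le (norm_nonneg _) one_pos.le
            have h3 : l * ‖y - yb‖ < l * (r / 2) := by gcongr
            linarith
        _ = l * r := by rw [hl]; field_simp; ring
    calc l⁻¹ * ‖l • (y - yb) + (1 - l) • (y - y0)‖ < l⁻¹ * (l * r) := by gcongr
      _ = r := by field_simp
  have hzS : z ∈ closure (ruS F xb) := hS (by rwa [Metric.mem_ball, dist_eq_norm])
  obtain ⟨w, hwS, hwz⟩ := Metric.mem_closure_iff.1 hzS (ε / (2 * l) ) (by positivity)
  obtain ⟨u, hu1, huF⟩ := hwS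
  refine ⟨l • u + (1 - l) • x0, l • w + (1 - l) • y0,
    ru_comb hconv huF h0 hl0.le (by linarith) (by ring), ?_, ?_, ?_⟩
  · have e : l • w + (1 - l) • y0 - y = l • (w - z) := by
      rw [hz]; match_scalars <;> field_simp
    rw [e, norm_smul, Real.norm_of_nonneg hl0.le]
    rw [dist_eq_norm, norm_sub_rev] at hwz
    calc l * ‖w - z‖ < l * (ε / (2 * l)) := by gcongr
      _ = ε / 2 := by field_simp
  · have e : l • u + (1 - l) • x0 - x0 = l • (u - x0) := by module
    rw [e, norm_smul, Real.norm_of_nonneg hl0.le]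
    have : ‖u - x0‖ ≤ 3 := by
      calc ‖u - x0‖ ≤ ‖u - xb‖ + ‖xb - x0‖ := norm_sub_le_norm_sub_add_norm_sub _ _ _
        _ ≤ 1 + 2 := by rw [norm_sub_rev xb x0]; exact add_le_add hu1 hx0
        _ = 3 := by norm_num
    calc l * ‖u - x0‖ ≤ l * 3 := by gcongr
      _ ≤ 6 * ε / r := by rw [hl]; field_simp; ring_nf; linarith [mul_pos hε hr]
  · have e : l • u + (1 - l) • x0 - xb = l • (u - xb) + (1 - l) • (x0 - xb) := by
      match_scalars <;> ring
    rw [e]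
    calc ‖l • (u - xb) + (1 - l) • (x0 - xb)‖ ≤ l * ‖u - xb‖ + (1 - l) * ‖x0 - xb‖ := by
          refine (norm_add_le _ _).trans ?_
          rw [norm_smul, norm_smul, Real.norm_of_nonneg hl0.le,
            Real.norm_of_nonneg (by linarith : (0:ℝ) ≤ 1 - l)]
      _ ≤ l * 1 + 1 * ‖x0 - xb‖ := by
          refine add_le_add (by gcongr) ?_
          exact mul_le_mul (by linarith) le_rfl (norm_nonneg _) one_pos.le
      _ = ‖x0 - xb‖ + 2 * ε / r := by rw [hl]; ring
end RU3

section RU4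
variable {X Y : Type*}
  [NormedAddCommGroup X] [NormedSpace ℝ X] [CompleteSpace X]
  [NormedAddCommGroup Y] [NormedSpace ℝ Y]
  {F : X → Set Y} {xb : X} {yb : Y}

lemma ru_open (hconv : Convex ℝ {p : X × Y | p.2 ∈ F p.1})
    (hclosed : IsClosed {p : X × Y | p.2 ∈ F p.1}) (hxy : yb ∈ F xb)
    {r : ℝ} (hr : 0 < r) (hS : Metric.ball yb r ⊆ closure (ruS F xb)) :
    ∀ y : Y, ‖y - yb‖ < r / 2 → ∃ x : X, ‖x - xb‖ ≤ 2 ∧ y ∈ F x := by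
  intro y hy
  set Q : ℕ → X × Y → Prop := fun n p =>
    p.2 ∈ F p.1 ∧ ‖p.2 - y‖ < r / 2 / 2 ^ n ∧ ‖p.1 - xb‖ ≤ 2 - 2 / 2 ^ n with hQdef
  have base : Q 0 (xb, yb) := by
    refine ⟨hxy, ?_, by norm_num⟩
    simpa [norm_sub_rev] using hy
  have step : ∀ n (p : X × Y), Q n p → ∃ q : X × Y, Q (n + 1) q ∧ ‖q.1 - p.1‖ ≤ 3 / 2 ^ n := by
    rintro n ⟨x0, y0⟩ ⟨h0, hy0, hx0⟩
    have h2n : (0:ℝ) < 2 ^ n := by positivity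
    have hε : (0:ℝ) < r / 2 / 2 ^ n := by positivity
    have h1n : (1:ℝ) ≤ 2 ^ n := one_le_pow₀ (by norm_num)
    have hε2 : r / 2 / 2 ^ n ≤ r / 2 := by
      calc r / 2 / 2 ^ n ≤ r / 2 / 1 := by gcongr
        _ = r / 2 := by ring
    obtain ⟨x1, y1, h1, hy1, hd, hxb⟩ := ru_step hconv hr hS hε hε2 hy h0 hy0
      (by nlinarith [div_pos (by norm_num : (0:ℝ) < 2) h2n])
    refine ⟨(x1, y1), ⟨h1, ?_, ?_⟩, ?_⟩
    · show ‖y1 - y‖ < r / 2 / 2 ^ (n + 1)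
      calc ‖y1 - y‖ < r / 2 / 2 ^ n / 2 := hy1
        _ = r / 2 / 2 ^ (n + 1) := by rw [pow_succ]; ring
    · show ‖x1 - xb‖ ≤ 2 - 2 / 2 ^ (n + 1)
      have : 2 * (r / 2 / 2 ^ n) / r = 1 / 2 ^ n := by field_simp
      rw [this] at hxb
      have : (2:ℝ) / 2 ^ (n + 1) = 1 / 2 ^ n := by rw [pow_succ]; ring
      rw [this]
      have h22 : (2:ℝ) / 2 ^ n = 2 * (1 / 2 ^ n) := by ring
      linarith
    · show ‖x1 - x0‖ ≤ 3 / 2 ^ n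
      have : 6 * (r / 2 / 2 ^ n) / r = 3 / 2 ^ n := by field_simp; ring
      rwa [this] at hd
  choose! f hf1 hf2 using step
  set seq : ℕ → X × Y := fun n => Nat.rec (xb, yb) f n with hseq
  have hQ : ∀ n, Q n (seq n) := by
    intro n
    induction n with
    | zero => exact base
    | succ n ih => exact hf1 n (seq n) ih
  have hd : ∀ n, ‖(seq (n + 1)).1 - (seq n).1‖ ≤ 3 / 2 ^ n := fun n => hf2 n (seq n) (hQ n)
  have hcauchy : CauchySeq (fun n => (seq n).1) := by
    refine cauchySeq_of_le_geometric (1/2) 3 (by norm_num) fun n => ?_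
    rw [dist_eq_norm, norm_sub_rev]
    calc ‖(seq (n+1)).1 - (seq n).1‖ ≤ 3 / 2 ^ n := hd n
      _ = 3 * (1/2) ^ n := by rw [div_eq_mul_inv, ← inv_pow, ← one_div]
  obtain ⟨x, hx⟩ := cauchySeq_tendsto_of_complete hcauchy
  have hy2 : Filter.Tendsto (fun n => (seq n).2) Filter.atTop (nhds y) := by
    rw [← tendsto_sub_nhds_zero_iff]
    refine squeeze_zero_norm (fun n => (hQ n).2.1.le) ?_
    have : Filter.Tendsto (fun n : ℕ => r / 2 * (1/2) ^ n) Filter.atTop (nhds 0) := by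
      simpa using (tendsto_pow_atTop_nhds_zero_of_lt_one (by norm_num : (0:ℝ) ≤ 1/2)
        (by norm_num)).const_mul (r / 2)
    convert this using 2 with n
    rw [div_eq_mul_inv (r/2), ← inv_pow, ← one_div]
  have hmem : y ∈ F x := by
    have ht : Filter.Tendsto (fun n => ((seq n).1, (seq n).2)) Filter.atTop (nhds (x, y)) :=
      hx.prodMk_nhds hy2
    have := hclosed.mem_of_tendsto ht (Filter.Eventually.of_forall fun n => (hQ n).1)
    exact this
  refine ⟨x, ?_, hmem⟩
  have hnorm : Filter.Tendsto (fun n => ‖(seq n).1 - xb‖) Filter.atTop (nhds ‖x - xb‖) :=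
    ((hx.sub_const xb).norm)
  refine le_of_tendsto hnorm (Filter.Eventually.of_forall fun n => ?_)
  have h2n : (0:ℝ) < 2 / 2 ^ n := by positivity
  linarith [(hQ n).2.2]
end RU4

section RU5
variable {X Y : Type*}
  [NormedAddCommGroup X] [NormedSpace ℝ X]
  [NormedAddCommGroup Y] [NormedSpace ℝ Y]
  {F : X → Set Y} {xb : X} {yb : Y}

lemma ru_reg (hconv : Convex ℝ {p : X × Y | p.2 ∈ F p.1}) {r : ℝ} (hr : 0 < r)
    (hA : ∀ y : Y, ‖y - yb‖ < r / 2 → ∃ x : X, ‖x - xb‖ ≤ 2 ∧ y ∈ F x)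
    {x0 : X} {y0 y : Y} (h0 : y0 ∈ F x0) (hy0 : ‖y0 - yb‖ < r / 4) (hy : ‖y - yb‖ < r / 4) :
    ∃ x' : X, y ∈ F x' ∧ ‖x' - x0‖ ≤ 4 / r * (2 + ‖x0 - xb‖) * ‖y - y0‖ := by
  rcases eq_or_ne y y0 with rfl | hne
  · exact ⟨x0, h0, by simp⟩
  · set t : ℝ := ‖y - y0‖ with ht
    have ht0 : 0 < t := by rwa [ht, norm_pos_iff, sub_ne_zero]
    set w : Y := y + ((r / 4) / t) • (y - y0) with hw
    have hwb : ‖w - yb‖ < r / 2 := by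
      have e : w - yb = (y - yb) + ((r / 4) / t) • (y - y0) := by rw [hw]; abel
      rw [e]
      calc ‖(y - yb) + ((r / 4) / t) • (y - y0)‖ ≤ ‖y - yb‖ + ((r / 4) / t) * ‖y - y0‖ := by
            refine (norm_add_le _ _).trans ?_
            rw [norm_smul, Real.norm_of_nonneg (by positivity)]
        _ = ‖y - yb‖ + r / 4 := by rw [← ht]; field_simp
        _ < r / 2 := by linarith
    obtain ⟨u, hu2, huF⟩ := hA w hwb
    set l : ℝ := t / (t + r / 4) with hl
    have hl0 : 0 < l := by positivity
    have hl1 : l ≤ 1 := by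
      rw [hl, div_le_one (by positivity)]; linarith
    refine ⟨l • u + (1 - l) • x0, ?_, ?_⟩
    · have h := ru_comb hconv huF h0 (a := l) (b := 1 - l) hl0.le (by linarith) (by ring)
      have htr : t + r / 4 ≠ 0 := by positivity
      have hscal : l * (1 + r / 4 / t) = 1 := by
        rw [hl]; field_simp
      have e : l • w + (1 - l) • y0 = y := by
        have hw0 : w - y0 = (1 + r / 4 / t) • (y - y0) := by rw [hw]; module
        calc l • w + (1 - l) • y0 = y0 + l • (w - y0) := by module
          _ = y0 + (l * (1 + r / 4 / t)) • (y - y0) := by rw [hw0, smul_smul]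
          _ = y0 + (1 : ℝ) • (y - y0) := by rw [hscal]
          _ = y := by module
      rwa [e] at h
    · have e : l • u + (1 - l) • x0 - x0 = l • (u - x0) := by module
      rw [e, norm_smul, Real.norm_of_nonneg hl0.le]
      have hux : ‖u - x0‖ ≤ 2 + ‖x0 - xb‖ := by
        calc ‖u - x0‖ ≤ ‖u - xb‖ + ‖xb - x0‖ := norm_sub_le_norm_sub_add_norm_sub _ _ _
          _ ≤ 2 + ‖x0 - xb‖ := by rw [norm_sub_rev xb x0]; exact add_le_add hu2 le_rfl
      have hll : l ≤ 4 / r * t := by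
        rw [hl]
        calc t / (t + r / 4) ≤ t / (r / 4) := by gcongr; linarith
          _ = 4 / r * t := by field_simp
      calc l * ‖u - x0‖ ≤ (4 / r * t) * (2 + ‖x0 - xb‖) :=
            mul_le_mul hll hux (norm_nonneg _) (by positivity)
        _ = 4 / r * (2 + ‖x0 - xb‖) * ‖y - y0‖ := by rw [← ht]; ring
end RU5


/-- Robinson–Ursescu theorem: if `F : X ⇒ Y` between Banach spaces has closed
convex graph and `yb ∈ int F(X)`, then `F` is metrically regular at every point
`(xb, yb)` of its graph: there are `K > 0` and `ε > 0` such that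
`d(x, F⁻¹ y) ≤ K d(y, F x)` whenever `‖x − xb‖ < ε` and `‖y − yb‖ < ε`. -/
theorem robinson_ursescu {X Y : Type*}
    [NormedAddCommGroup X] [NormedSpace ℝ X] [CompleteSpace X]
    [NormedAddCommGroup Y] [NormedSpace ℝ Y] [CompleteSpace Y]
    (F : X → Set Y)
    (hconv : Convex ℝ {p : X × Y | p.2 ∈ F p.1})
    (hclosed : IsClosed {p : X × Y | p.2 ∈ F p.1})
    (yb : Y) (hint : yb ∈ interior {y : Y | ∃ x : X, y ∈ F x})
    (xb : X) (hxy : yb ∈ F xb) :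
    ∃ K : ℝ≥0, 0 < K ∧ ∃ ε : ℝ, 0 < ε ∧ ∀ x : X, ∀ y : Y,
      dist x xb < ε → dist y yb < ε →
        infEdist x {u : X | y ∈ F u} ≤ (K : ℝ≥0∞) * infEdist y (F x) := by
  obtain ⟨r, hr, hS⟩ := ru_dense hconv hint hxy
  have hA := ru_open hconv hclosed hxy hr hS
  refine ⟨Real.toNNReal (24 / r), Real.toNNReal_pos.2 (by positivity), min (r / 16) 1,
    lt_min (by positivity) one_pos, fun x y hx hy => ?_⟩
  have hKco : ((Real.toNNReal (24 / r) : ℝ≥0) : ℝ≥0∞) = ENNReal.ofReal (24 / r) := rfl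
  have hxb : ‖x - xb‖ < 1 := lt_of_lt_of_le (by rw [← dist_eq_norm]; exact hx) (min_le_right _ _)
  have hyb' : ‖y - yb‖ < r / 16 := lt_of_lt_of_le (by rw [← dist_eq_norm]; exact hy) (min_le_left _ _)
  have hy4 : ‖y - yb‖ < r / 4 := lt_of_lt_of_le hyb' (by linarith)
  by_cases hcase : infEdist y (F x) < ENNReal.ofReal (r / 16)
  · -- the distance from `y` to `F x` is small
    refine ENNReal.le_of_forall_pos_le_add fun θ hθ _ => ?_
    set η : ℝ := min (r / 16) (θ * r / 24) with hη
    have hθR : (0:ℝ) < θ := hθ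
    have hη0 : 0 < η := lt_min (by positivity) (by positivity)
    have hdne : infEdist y (F x) ≠ ⊤ := (hcase.trans ofReal_lt_top).ne
    have hlt : infEdist y (F x) < infEdist y (F x) + ENNReal.ofReal η :=
      ENNReal.lt_add_right hdne (ENNReal.ofReal_pos.2 hη0).ne'
    obtain ⟨y0, hy0F, hy0d⟩ := infEdist_lt_iff.1 hlt
    have hη16 : η ≤ r / 16 := min_le_left _ _
    have hy0r : dist y y0 < r / 8 := by
      have h1 : edist y y0 < ENNReal.ofReal (r / 16) + ENNReal.ofReal η :=
        hy0d.trans_le (add_le_add hcase.le le_rfl)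
      rw [← ENNReal.ofReal_add (by positivity) hη0.le, edist_dist] at h1
      have := (ENNReal.ofReal_lt_ofReal_iff_of_nonneg dist_nonneg).1 h1
      linarith
    have hy0b : ‖y0 - yb‖ < r / 4 := by
      calc ‖y0 - yb‖ ≤ ‖y0 - y‖ + ‖y - yb‖ := norm_sub_le_norm_sub_add_norm_sub _ _ _
        _ < r / 8 + r / 16 := by
            refine add_lt_add ?_ hyb'
            rw [← dist_eq_norm, dist_comm]; exact hy0r
        _ ≤ r / 4 := by linarith
    obtain ⟨x', hx'F, hx'd⟩ := ru_reg hconv hr hA hy0F hy0b hy4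
    have hx'mem : x' ∈ {u : X | y ∈ F u} := hx'F
    have hbound : dist x x' ≤ 12 / r * dist y y0 := by
      rw [dist_comm, dist_eq_norm]
      calc ‖x' - x‖ ≤ 4 / r * (2 + ‖x - xb‖) * ‖y - y0‖ := hx'd
        _ ≤ 4 / r * (2 + 1) * ‖y - y0‖ := by gcongr
        _ = 12 / r * dist y y0 := by rw [dist_eq_norm]; ring
    calc infEdist x {u : X | y ∈ F u} ≤ edist x x' := infEdist_le_edist_of_mem hx'mem
      _ = ENNReal.ofReal (dist x x') := edist_dist _ _
      _ ≤ ENNReal.ofReal (12 / r * dist y y0) := ENNReal.ofReal_le_ofReal hbound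
      _ = ENNReal.ofReal (12 / r) * edist y y0 := by
          rw [ENNReal.ofReal_mul (by positivity), edist_dist]
      _ ≤ ENNReal.ofReal (12 / r) * (infEdist y (F x) + ENNReal.ofReal η) :=
          mul_le_mul' le_rfl hy0d.le
      _ = ENNReal.ofReal (12 / r) * infEdist y (F x)
            + ENNReal.ofReal (12 / r) * ENNReal.ofReal η := by rw [mul_add]
      _ ≤ (Real.toNNReal (24 / r) : ℝ≥0∞) * infEdist y (F x) + (θ : ℝ≥0∞) := by
          refine add_le_add (mul_le_mul' ?_ le_rfl) ?_
          · rw [hKco]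
            exact ENNReal.ofReal_le_ofReal (by gcongr <;> norm_num)
          · rw [← ENNReal.ofReal_mul (by positivity), ← ENNReal.ofReal_coe_nnreal]
            refine ENNReal.ofReal_le_ofReal ?_
            have hη2 : η ≤ θ * r / 24 := min_le_right _ _
            calc 12 / r * η ≤ 12 / r * (θ * r / 24) := by gcongr
              _ = θ / 2 := by field_simp; ring
              _ ≤ θ := by linarith
  · -- the distance from `y` to `F x` is at least `r / 16`
    have hge : ENNReal.ofReal (r / 16) ≤ infEdist y (F x) := not_lt.1 hcase
    obtain ⟨x', hx'F, hx'd⟩ := ru_reg hconv hr hA hxy (by simpa using (by positivity : (0:ℝ) < r / 4)) hy4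
    have hx'b : ‖x' - xb‖ ≤ 1 / 2 := by
      calc ‖x' - xb‖ ≤ 4 / r * (2 + ‖xb - xb‖) * ‖y - yb‖ := hx'd
        _ = 8 / r * ‖y - yb‖ := by rw [sub_self, norm_zero]; ring
        _ ≤ 8 / r * (r / 16) := by gcongr
        _ = 1 / 2 := by field_simp; ring
    have hbound : dist x x' ≤ 3 / 2 := by
      rw [dist_eq_norm]
      calc ‖x - x'‖ ≤ ‖x - xb‖ + ‖xb - x'‖ := norm_sub_le_norm_sub_add_norm_sub _ _ _
        _ ≤ 1 + 1 / 2 := by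
            refine add_le_add hxb.le ?_
            rw [norm_sub_rev]; exact hx'b
        _ = 3 / 2 := by norm_num
    calc infEdist x {u : X | y ∈ F u} ≤ edist x x' := infEdist_le_edist_of_mem hx'F
      _ = ENNReal.ofReal (dist x x') := edist_dist _ _
      _ ≤ ENNReal.ofReal (3 / 2) := ENNReal.ofReal_le_ofReal hbound
      _ = ENNReal.ofReal (24 / r) * ENNReal.ofReal (r / 16) := by
          rw [← ENNReal.ofReal_mul (by positivity)]
          congr 1
          field_simp
          norm_num
      _ ≤ (Real.toNNReal (24 / r) : ℝ≥0∞) * infEdist y (F x) := by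
          rw [hKco]; exact mul_le_mul' le_rfl hge
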